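/- Let H be the group with presentation ⟨x₁, x₂, x₃, … | x_i = [x_{2i}, x_{2i+1}] for all i ≥ 1⟩. Then H is perfect: its commutator subgroup equals H. -/

import Mathlib

open scoped commutatorElement

/-- The relators `xᵢ · ⁅x_{2i}, x_{2i+1}⁆⁻¹` of Berrick and Casacuberta's group `𝓗`,
on generators indexed by the positive integers. -/
def hRels : Set (FreeGroup ℕ+) :=
  {r | ∃ i : ℕ+, r = FreeGroup.of i * ⁅FreeGroup.of (2 * i), FreeGroup.of (2 * i + 1)⁆⁻¹}

lemma hRels_of_eq (i : ℕ+) :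
    (PresentedGroup.of i : PresentedGroup hRels) =
      ⁅(PresentedGroup.of (2 * i) : PresentedGroup hRels), PresentedGroup.of (2 * i + 1)⁆ := by
  have hmem : FreeGroup.of i * ⁅FreeGroup.of (2 * i), FreeGroup.of (2 * i + 1)⁆⁻¹ ∈
      Subgroup.normalClosure hRels :=
    Subgroup.subset_normalClosure ⟨i, rfl⟩
  have h1 : (PresentedGroup.mk hRels)
      (FreeGroup.of i * ⁅FreeGroup.of (2 * i), FreeGroup.of (2 * i + 1)⁆⁻¹) = 1 :=
    (QuotientGroup.eq_one_iff _).2 hmem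
  have := h1
  simp only [map_mul, map_inv, map_commutatorElement] at this
  have h2 := mul_eq_one_iff_eq_inv.1 this
  simpa [PresentedGroup.of, PresentedGroup.mk] using h2

/-- The group `𝓗 = ⟨x₁, x₂, … ∣ xᵢ = ⁅x_{2i}, x_{2i+1}⁆⟩` is perfect. -/
theorem presentedGroup_perfect : commutator (PresentedGroup hRels) = ⊤ := by
  rw [eq_top_iff]
  intro x _
  refine PresentedGroup.generated_by hRels _ (fun j => ?_) x
  rw [hRels_of_eq j]
  exact Subgroup.commutator_mem_commutator (Subgroup.mem_top _) (Subgroup.mem_top _)
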